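/- Let p be an odd prime and γ ∈ SL₂(𝔽_p) with γ ≠ ±I. Then the number of lines in 𝔽_p² fixed by γ, minus 1, equals the Legendre symbol (tr(γ)² - 4 / p). -/

import Mathlib

open Matrix Module

/-- The number of lines (1-dimensional subspaces) of `𝔽_p²` fixed by `γ`. -/
noncomputable def fixedLineCount (p : ℕ) [Fact p.Prime]
    (γ : Matrix.SpecialLinearGroup (Fin 2) (ZMod p)) : ℕ :=
  Nat.card {ℓ : Submodule (ZMod p) (Fin 2 → ZMod p) //
    Module.finrank (ZMod p) ℓ = 1 ∧
      ℓ.map (Matrix.mulVecLin (γ : Matrix (Fin 2) (Fin 2) (ZMod p))) = ℓ}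

section Aux

variable {p : ℕ} [Fact p.Prime]

lemma char_det (M : Matrix (Fin 2) (Fin 2) (ZMod p)) (hdet : M.det = 1) (lam : ZMod p) :
    (M - lam • 1).det = lam ^ 2 - M.trace * lam + 1 := by
  rw [Matrix.det_fin_two] at hdet ⊢
  simp only [Matrix.sub_apply, Matrix.smul_apply, Matrix.one_apply, Matrix.trace_fin_two]
  simp only [Fin.isValue, if_true, if_neg (by decide : (0 : Fin 2) ≠ 1),
    if_neg (by decide : (1 : Fin 2) ≠ 0), smul_eq_mul, mul_one, mul_zero, sub_zero]
  linear_combination hdet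

lemma mem_ker_iff (M : Matrix (Fin 2) (Fin 2) (ZMod p)) (lam : ZMod p) (v : Fin 2 → ZMod p) :
    v ∈ LinearMap.ker (M - lam • 1).mulVecLin ↔ M.mulVec v = lam • v := by
  rw [LinearMap.mem_ker, Matrix.mulVecLin_apply, Matrix.sub_mulVec, sub_eq_zero,
    Matrix.smul_mulVec, Matrix.one_mulVec]

lemma not_scalar {γ : Matrix.SpecialLinearGroup (Fin 2) (ZMod p)} (h1 : γ ≠ 1) (h2 : γ ≠ -1)
    (lam : ZMod p) : (γ : Matrix (Fin 2) (Fin 2) (ZMod p)) ≠ lam • 1 := by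
  intro h
  have hdet : (γ : Matrix (Fin 2) (Fin 2) (ZMod p)).det = 1 := γ.2
  rw [h, Matrix.det_smul, Matrix.det_one, mul_one] at hdet
  have : (lam - 1) * (lam + 1) = 0 := by
    have : lam ^ 2 = 1 := by simpa [Fintype.card_fin] using hdet
    linear_combination this
  rcases mul_eq_zero.1 this with h' | h'
  · refine h1 (Subtype.ext ?_)
    rw [h, sub_eq_zero.1 h', one_smul]
    simp
  · refine h2 (Subtype.ext ?_)
    rw [h, eq_neg_of_add_eq_zero_left h', neg_smul, one_smul]
    simp

variable {γ : Matrix.SpecialLinearGroup (Fin 2) (ZMod p)}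

lemma ker_ne_top (h1 : γ ≠ 1) (h2 : γ ≠ -1) (lam : ZMod p) :
    LinearMap.ker ((γ : Matrix (Fin 2) (Fin 2) (ZMod p)) - lam • 1).mulVecLin ≠ ⊤ := by
  intro htop
  set M := (γ : Matrix (Fin 2) (Fin 2) (ZMod p)) with hM
  have hz : (M - lam • 1).mulVecLin = 0 := LinearMap.ker_eq_top.mp htop
  have h0 : M - lam • 1 = 0 := by
    ext i j
    have := congrFun (congrArg DFunLike.coe hz) (Pi.single j 1)
    simpa [Matrix.mulVecLin_apply, Matrix.mulVec_single_one, Pi.single_apply, Matrix.one_apply] using congrFun this i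
  exact not_scalar h1 h2 lam (sub_eq_zero.1 h0)

lemma finrank_ker_eq_one (h1 : γ ≠ 1) (h2 : γ ≠ -1) {lam : ZMod p}
    (hroot : lam ^ 2 - Matrix.trace (γ : Matrix (Fin 2) (Fin 2) (ZMod p)) * lam + 1 = 0) :
    Module.finrank (ZMod p)
      (LinearMap.ker ((γ : Matrix (Fin 2) (Fin 2) (ZMod p)) - lam • 1).mulVecLin) = 1 := by
  set M := (γ : Matrix (Fin 2) (Fin 2) (ZMod p)) with hM
  have hdet0 : (M - lam • 1).det = 0 := by rw [char_det M γ.2 lam, hroot]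
  obtain ⟨v, hv0, hv⟩ := (Matrix.exists_mulVec_eq_zero_iff).2 hdet0
  have hne_bot : LinearMap.ker (M - lam • 1).mulVecLin ≠ ⊥ := by
    intro hbot
    exact hv0 ((Submodule.eq_bot_iff _).1 hbot v (by rw [LinearMap.mem_ker, Matrix.mulVecLin_apply]; exact hv))
  have h1' : 1 ≤ Module.finrank (ZMod p) (LinearMap.ker (M - lam • 1).mulVecLin) := by
    rw [Nat.one_le_iff_ne_zero]
    intro h0
    exact hne_bot (Submodule.finrank_eq_zero.mp h0)
  have h2' : Module.finrank (ZMod p) (LinearMap.ker (M - lam • 1).mulVecLin) < 2 := by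
    have := Submodule.finrank_lt (K := ZMod p) (V := Fin 2 → ZMod p)
      (ker_ne_top h1 h2 lam)
    simpa using this
  omega

lemma map_ker (lam : ZMod p) :
    (LinearMap.ker ((γ : Matrix (Fin 2) (Fin 2) (ZMod p)) - lam • 1).mulVecLin).map
      (Matrix.mulVecLin (γ : Matrix (Fin 2) (Fin 2) (ZMod p)))
      = LinearMap.ker ((γ : Matrix (Fin 2) (Fin 2) (ZMod p)) - lam • 1).mulVecLin := by
  set M := (γ : Matrix (Fin 2) (Fin 2) (ZMod p)) with hM
  have hinj : Function.Injective M.mulVecLin := by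
    have hu : IsUnit M := (Matrix.isUnit_iff_isUnit_det M).2 (by rw [γ.2]; exact isUnit_one)
    simpa [Matrix.coe_mulVecLin] using Matrix.mulVec_injective_iff_isUnit.2 hu
  set K := LinearMap.ker (M - lam • 1).mulVecLin with hK
  -- the image is contained in the kernel, and has the same finrank
  have hle : K.map M.mulVecLin ≤ K := by
    rintro _ ⟨v, hv, rfl⟩
    simp only [hK, SetLike.mem_coe, LinearMap.mem_ker, Matrix.mulVecLin_apply] at hv ⊢
    rw [Matrix.mulVec_mulVec, show (M - lam • 1) * M = M * (M - lam • 1) by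
      rw [sub_mul, mul_sub, Matrix.smul_mul, Matrix.mul_smul, Matrix.one_mul, Matrix.mul_one],
      ← Matrix.mulVec_mulVec, hv, Matrix.mulVec_zero]
  have hrk : Module.finrank (ZMod p) (K.map M.mulVecLin) = Module.finrank (ZMod p) K :=
    (Submodule.equivMapOfInjective _ hinj K).symm.finrank_eq
  exact Submodule.eq_of_le_of_finrank_le hle (le_of_eq hrk.symm)

set_option maxHeartbeats 1000000 in
lemma count_eq (h1 : γ ≠ 1) (h2 : γ ≠ -1) :
    fixedLineCount p γ =
      Nat.card {lam : ZMod p //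
        lam ^ 2 - Matrix.trace (γ : Matrix (Fin 2) (Fin 2) (ZMod p)) * lam + 1 = 0} := by
  unfold fixedLineCount
  symm
  refine Nat.card_eq_of_bijective (fun lam =>
    (⟨LinearMap.ker ((γ : Matrix (Fin 2) (Fin 2) (ZMod p)) - lam.1 • 1).mulVecLin,
      finrank_ker_eq_one h1 h2 lam.2, map_ker lam.1⟩ :
      {ℓ : Submodule (ZMod p) (Fin 2 → ZMod p) //
        Module.finrank (ZMod p) ℓ = 1 ∧ ℓ.map (γ : Matrix (Fin 2) (Fin 2) (ZMod p)).mulVecLin = ℓ})) ?_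
  constructor
  · rintro ⟨l1, hl1⟩ ⟨l2, hl2⟩ h
    have hker : LinearMap.ker ((γ : Matrix (Fin 2) (Fin 2) (ZMod p)) - l1 • 1).mulVecLin = LinearMap.ker ((γ : Matrix (Fin 2) (Fin 2) (ZMod p)) - l2 • 1).mulVecLin := by
      simpa using congrArg Subtype.val h
    have hne : LinearMap.ker ((γ : Matrix (Fin 2) (Fin 2) (ZMod p)) - l1 • 1).mulVecLin ≠ ⊥ := by
      intro hbot
      have := finrank_ker_eq_one h1 h2 hl1
      rw [hbot] at this
      simp at this
    obtain ⟨v, hv, hv0⟩ := Submodule.exists_mem_ne_zero_of_ne_bot hne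
    have e1 : (γ : Matrix (Fin 2) (Fin 2) (ZMod p)).mulVec v = l1 • v := (mem_ker_iff (γ : Matrix (Fin 2) (Fin 2) (ZMod p)) l1 v).1 hv
    have e2 : (γ : Matrix (Fin 2) (Fin 2) (ZMod p)).mulVec v = l2 • v := (mem_ker_iff (γ : Matrix (Fin 2) (Fin 2) (ZMod p)) l2 v).1 (hker ▸ hv)
    have : (l1 - l2) • v = 0 := by rw [sub_smul, ← e1, ← e2, sub_self]
    rcases smul_eq_zero.1 this with h' | h'
    · exact Subtype.ext (sub_eq_zero.1 h')
    · exact absurd h' hv0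
  · rintro ⟨ℓ, hrank, hfix⟩
    have hbot : ℓ ≠ ⊥ := by
      intro h
      rw [h] at hrank; simp at hrank
    obtain ⟨v, hv, hv0⟩ := Submodule.exists_mem_ne_zero_of_ne_bot hbot
    have hspan : ℓ = Submodule.span (ZMod p) {v} := by
      symm
      apply Submodule.eq_of_le_of_finrank_le
        ((Submodule.span_singleton_le_iff_mem v ℓ).2 hv)
      rw [hrank, finrank_span_singleton hv0]
    have hMv : (γ : Matrix (Fin 2) (Fin 2) (ZMod p)).mulVec v ∈ ℓ := by
      rw [← hfix]
      exact ⟨v, hv, rfl⟩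
    obtain ⟨lam, hlam⟩ := Submodule.mem_span_singleton.1 (hspan ▸ hMv)
    have hvker : v ∈ LinearMap.ker ((γ : Matrix (Fin 2) (Fin 2) (ZMod p)) - lam • 1).mulVecLin := (mem_ker_iff (γ : Matrix (Fin 2) (Fin 2) (ZMod p)) lam v).2 hlam.symm
    have hdet0 : ((γ : Matrix (Fin 2) (Fin 2) (ZMod p)) - lam • 1).det = 0 := by
      rw [← Matrix.exists_mulVec_eq_zero_iff]
      exact ⟨v, hv0, by rwa [LinearMap.mem_ker, Matrix.mulVecLin_apply] at hvker⟩
    have hroot : lam ^ 2 - Matrix.trace (γ : Matrix (Fin 2) (Fin 2) (ZMod p)) * lam + 1 = 0 := by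
      rw [← char_det (γ : Matrix (Fin 2) (Fin 2) (ZMod p)) γ.2 lam]; exact hdet0
    refine ⟨⟨lam, hroot⟩, ?_⟩
    refine Subtype.ext ?_
    show LinearMap.ker ((γ : Matrix (Fin 2) (Fin 2) (ZMod p)) - lam • 1).mulVecLin = ℓ
    symm
    apply Submodule.eq_of_le_of_finrank_le
    · rw [hspan]
      exact (Submodule.span_singleton_le_iff_mem v _).2 hvker
    · rw [hrank, finrank_ker_eq_one h1 h2 hroot]

end Aux

theorem stmt_5 (p : ℕ) [Fact p.Prime] (hp : p ≠ 2)
    (γ : Matrix.SpecialLinearGroup (Fin 2) (ZMod p)) (h1 : γ ≠ 1) (h2 : γ ≠ -1) :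
    (fixedLineCount p γ : ℤ) - 1 =
      legendreSym p (((Matrix.trace (γ : Matrix (Fin 2) (Fin 2) (ZMod p)) ^ 2 - 4 : ZMod p)).val) := by
  set t := Matrix.trace (γ : Matrix (Fin 2) (Fin 2) (ZMod p)) with ht
  clear_value t
  have h2ne : (2 : ZMod p) ≠ 0 := by
    intro h
    have hdvd : p ∣ 2 := (ZMod.natCast_eq_zero_iff 2 p).1 (by exact_mod_cast h)
    exact hp ((Nat.prime_dvd_prime_iff_eq Fact.out Nat.prime_two).1 hdvd)
  have e : {lam : ZMod p // lam ^ 2 - t * lam + 1 = 0} ≃ {x : ZMod p // x ^ 2 = t ^ 2 - 4} :=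
    { toFun := fun lam => ⟨2 * lam.1 - t, by linear_combination (4 : ZMod p) * lam.2⟩
      invFun := fun x => ⟨(x.1 + t) / 2, by
        obtain ⟨x, hx⟩ := x
        have h4 : (4 : ZMod p) ≠ 0 := by
          rw [show (4 : ZMod p) = 2 * 2 by norm_num]
          exact mul_ne_zero h2ne h2ne
        set y := (x + t) / 2 with hy0
        have hy : 2 * y = x + t := by
          rw [hy0, mul_comm, div_mul_cancel₀ _ h2ne]
        have h40 : (4 : ZMod p) * (y ^ 2 - t * y + 1) = 0 := by
          linear_combination (2 * y + x - t) * hy + hx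
        exact (mul_eq_zero.1 h40).resolve_left h4⟩
      left_inv := fun lam => by
        ext
        field_simp
        ring
      right_inv := fun x => by
        ext
        field_simp
        ring }
  rw [count_eq h1 h2, ← ht, Nat.card_congr e]
  have hcast : (((t ^ 2 - 4 : ZMod p).val : ℤ) : ZMod p) = t ^ 2 - 4 := by
    push_cast
    simp [ZMod.natCast_val, ZMod.cast_id]
  have hcard := legendreSym.card_sqrts (p := p) hp ((t ^ 2 - 4 : ZMod p).val : ℤ)
  rw [hcast] at hcard
  have hfin : Nat.card {x : ZMod p // x ^ 2 = t ^ 2 - 4}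
      = {x : ZMod p | x ^ 2 = t ^ 2 - 4}.toFinset.card := by
    rw [← Set.ncard_eq_toFinset_card']
    exact Nat.card_coe_set_eq _
  rw [hfin]
  linarith [hcard]
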